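/- Let d ≥ 2, b > a ≥ 1, 0 < l ≤ b, and suppose a + l > b. If the function f(x) = ((a x + l)/b)^d has no fixed point in [1,∞), then h(T_{M(a,b;l)}) > log b. -/

import Mathlib

open Filter Real

/-- `treeP d M n i` = number of `n`-blocks of the hom Markov tree-shift `T_M`
on the `d`-tree whose root label is `i`. -/
def treeP (d : ℕ) {ι : Type} [Fintype ι] (M : Matrix ι ι ℕ) : ℕ → ι → ℕ
  | 0, _ => 1
  | n + 1, i => (∑ j, M i j * treeP d M n j) ^ d

/-- `|Δ_n| = 1 + d + ⋯ + d^n`. -/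
def deltaCard (d n : ℕ) : ℕ := ∑ i ∈ Finset.range (n + 1), d ^ i

/-- Topological entropy of the hom Markov tree-shift `T_M` on the `d`-tree. -/
noncomputable def treeEntropy (d : ℕ) {ι : Type} [Fintype ι] (M : Matrix ι ι ℕ) : ℝ :=
  Filter.limsup (fun n => Real.log (∑ i, treeP d M n i) / (deltaCard d n : ℝ)) Filter.atTop

/-- `M` has entries in `{0,1}`. -/
def IsBinary {ι : Type} [Fintype ι] (M : Matrix ι ι ℕ) : Prop := ∀ i j, M i j ≤ 1

/-- `M` is irreducible. -/
def MatIrreducible {ι : Type} [Fintype ι] [DecidableEq ι] (M : Matrix ι ι ℕ) : Prop :=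
  ∀ i j, ∃ n, 1 ≤ n ∧ 0 < (M ^ n) i j

/-- `M` is the block matrix `[[E_a, R],[O, E_b]]` with `R` binary of constant row sum `l`. -/
def IsMabl (a b l : ℕ) (M : Matrix (Fin (a + b)) (Fin (a + b)) ℕ) : Prop :=
  (∀ i j, M i j ≤ 1) ∧
  (∀ i j : Fin (a + b), (i : ℕ) < a → (j : ℕ) < a → M i j = 1) ∧
  (∀ i j : Fin (a + b), a ≤ (i : ℕ) → a ≤ (j : ℕ) → M i j = 1) ∧
  (∀ i j : Fin (a + b), a ≤ (i : ℕ) → (j : ℕ) < a → M i j = 0) ∧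
  (∀ i : Fin (a + b), (i : ℕ) < a → (∑ j : Fin (a + b), if a ≤ (j : ℕ) then M i j else 0) = l)


def qf (d b : ℕ) : ℕ → ℕ
  | 0 => 1
  | n + 1 => (b * qf d b n) ^ d
def pf (d a b l : ℕ) : ℕ → ℕ
  | 0 => 1
  | n + 1 => (a * pf d a b l n + l * qf d b n) ^ d

lemma deltaCard_zero (d : ℕ) : deltaCard d 0 = 1 := by simp [deltaCard]

lemma deltaCard_succ (d n : ℕ) : deltaCard d (n + 1) = d * deltaCard d n + 1 := by
  rw [deltaCard, Finset.sum_range_succ', deltaCard, Finset.mul_sum]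
  simp [pow_succ, mul_comm]

lemma one_le_deltaCard (d n : ℕ) : 1 ≤ deltaCard d n := by
  induction n with
  | zero => simp [deltaCard_zero]
  | succ n ih => rw [deltaCard_succ]; omega

lemma deltaCard_lt (d n : ℕ) (hd : 2 ≤ d) : deltaCard d n < d ^ (n + 1) := by
  induction n with
  | zero => simp [deltaCard_zero]; omega
  | succ n ih =>
      rw [deltaCard_succ, pow_succ]
      have h1 := Nat.mul_le_mul_left d (Nat.succ_le_of_lt ih)
      rw [Nat.mul_succ] at h1
      have hc : d * d ^ (n+1) = d ^ (n+1) * d := mul_comm _ _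
      omega

lemma qf_pos (d b : ℕ) (hb : 1 ≤ b) (n : ℕ) : 1 ≤ qf d b n := by
  induction n with
  | zero => simp [qf]
  | succ n ih => rw [qf]; exact Nat.one_le_pow _ _ (by positivity)

lemma mul_qf (d b : ℕ) (n : ℕ) : b * qf d b n = b ^ deltaCard d n := by
  induction n with
  | zero => simp [qf, deltaCard_zero]
  | succ n ih => rw [qf, deltaCard_succ, ih, ← pow_mul, pow_succ, mul_comm (b ^ _) b, mul_comm d _]

lemma qf_le_pf (d a b l : ℕ) (hsum : b < a + l) (n : ℕ) :
    qf d b n ≤ pf d a b l n := by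
  induction n with
  | zero => simp [qf, pf]
  | succ n ih =>
      rw [qf, pf]
      apply Nat.pow_le_pow_left
      have h2 : a * qf d b n ≤ a * pf d a b l n := Nat.mul_le_mul_left a ih
      calc b * qf d b n ≤ (a + l) * qf d b n := Nat.mul_le_mul_right _ (by omega)
        _ = a * qf d b n + l * qf d b n := by rw [Nat.add_mul]
        _ ≤ a * pf d a b l n + l * qf d b n := by omega

lemma mul_pf_le (d a b l : ℕ) (hlb : l ≤ b) (hsum : b < a + l) (n : ℕ) :
    (a + b) * pf d a b l n ≤ (a + b) ^ deltaCard d n := by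
  induction n with
  | zero => simp [pf, deltaCard_zero]
  | succ n ih =>
      rw [pf, deltaCard_succ, pow_succ, mul_comm ((a+b) ^ _) (a+b), mul_comm d _, pow_mul]
      apply Nat.mul_le_mul_left
      apply Nat.pow_le_pow_left
      have h1 : l * qf d b n ≤ b * pf d a b l n :=
        Nat.mul_le_mul hlb (qf_le_pf d a b l hsum n)
      have h2 : a * pf d a b l n + b * pf d a b l n = (a + b) * pf d a b l n := by ring
      calc a * pf d a b l n + l * qf d b n ≤ (a+b) * pf d a b l n := by omega
        _ ≤ (a + b) ^ deltaCard d n := ih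

lemma count_sum (a b c₁ c₂ : ℕ) :
    (∑ j : Fin (a + b), if (j : ℕ) < a then c₁ else c₂) = a * c₁ + b * c₂ := by
  rw [Fin.sum_univ_eq_sum_range (fun j => if j < a then c₁ else c₂) (a + b)]
  rw [Finset.range_eq_Ico, ← Finset.sum_Ico_consecutive _ (Nat.zero_le a) (Nat.le_add_right a b)]
  rw [Finset.sum_congr rfl (fun x hx => if_pos (Finset.mem_Ico.1 hx).2),
      Finset.sum_congr rfl (fun x hx => if_neg (by
        have := (Finset.mem_Ico.1 hx).1; omega))]
  simp [Nat.mul_comm, mul_comm]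

lemma treeP_eq {d a b l : ℕ} (M : Matrix (Fin (a + b)) (Fin (a + b)) ℕ)
    (hM : IsMabl a b l M) (n : ℕ) (i : Fin (a + b)) :
    treeP d M n i = if (i : ℕ) < a then pf d a b l n else qf d b n := by
  obtain ⟨h1, h2, h3, h4, h5⟩ := hM
  induction n generalizing i with
  | zero => simp [treeP, pf, qf]
  | succ n ih =>
      by_cases hi : (i : ℕ) < a
      · rw [if_pos hi, treeP, pf]
        congr 1
        have key : ∀ j : Fin (a + b), M i j * treeP d M n j =
            (if (j : ℕ) < a then pf d a b l n else 0) +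
            (if a ≤ (j : ℕ) then M i j else 0) * qf d b n := by
          intro j
          by_cases hj : (j : ℕ) < a
          · rw [ih j, if_pos hj, if_pos hj, if_neg (by omega), h2 i j hi hj]; ring
          · rw [ih j, if_neg hj, if_neg hj, if_pos (by omega)]; ring
        rw [Finset.sum_congr rfl (fun j _ => key j), Finset.sum_add_distrib,
            ← Finset.sum_mul, h5 i hi]
        have := count_sum a b (pf d a b l n) 0
        omega
      · rw [if_neg hi, treeP, qf]
        congr 1
        have key : ∀ j : Fin (a + b), M i j * treeP d M n j =
            (if (j : ℕ) < a then 0 else qf d b n) := by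
          intro j
          by_cases hj : (j : ℕ) < a
          · rw [h4 i j (by omega) hj, if_pos hj, zero_mul]
          · rw [ih j, if_neg hj, if_neg hj, h3 i j (by omega) (by omega), one_mul]
        rw [Finset.sum_congr rfl (fun j _ => key j), count_sum]
        omega

lemma sum_treeP {d a b l : ℕ} (M : Matrix (Fin (a + b)) (Fin (a + b)) ℕ)
    (hM : IsMabl a b l M) (n : ℕ) :
    (∑ i, treeP d M n i) = a * pf d a b l n + b * qf d b n := by
  rw [Finset.sum_congr rfl (fun i _ => treeP_eq M hM n i), count_sum]

lemma no_fp_lt {d a b l : ℕ} (hd : 2 ≤ d) (hab : 1 ≤ b) (hsum : b < a + l)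
    (hfix : ¬ ∃ x : ℝ, 1 ≤ x ∧ (((a : ℝ) * x + l) / b) ^ d = x) :
    ∀ t : ℝ, 1 ≤ t → t < (((a : ℝ) * t + l) / b) ^ d := by
  have hB : (0:ℝ) < b := by exact_mod_cast Nat.pos_of_ne_zero (by omega)
  have hfc : Continuous fun t : ℝ => (((a : ℝ) * t + l) / b) ^ d := by
    apply Continuous.pow
    exact ((continuous_const.mul continuous_id).add continuous_const).div_const _
  intro t ht
  by_contra hle
  push_neg at hle
  set g : ℝ → ℝ := fun s => (((a : ℝ) * s + l) / b) ^ d - s with hg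
  have hgc : Continuous g := hfc.sub continuous_id
  have hg1 : 0 < g 1 := by
    have h1 : (1:ℝ) < ((a:ℝ) * 1 + l) / b := by
      rw [lt_div_iff₀ hB]
      have : (b:ℝ) < (a:ℝ) + l := by exact_mod_cast hsum
      linarith
    have := one_lt_pow₀ h1 (by omega : d ≠ 0)
    simp only [hg]
    linarith
  have hgt : g t ≤ 0 := by simp only [hg]; linarith
  have h0 : (0:ℝ) ∈ Set.Icc (g t) (g 1) := ⟨hgt, hg1.le⟩
  obtain ⟨c, hc, hgc0⟩ := intermediate_value_Icc' ht hgc.continuousOn h0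
  exact hfix ⟨c, hc.1, by have := sub_eq_zero.mp hgc0; linarith⟩


/-- **Theorem 3.2 (b)(i).** If `b > a ≥ 1`, `0 < l ≤ b`, `a + l > b` and
`f(x) = ((a x + l)/b)^d` has no fixed point in `[1,∞)`, then `h(T_{M(a,b;l)}) > log b`. -/
theorem treeEntropy_Mabl_gt_of_no_fixed_point {d a b l : ℕ} (hd : 2 ≤ d)
    (ha : 1 ≤ a) (hab : a < b) (hl : 0 < l) (hlb : l ≤ b) (hsum : b < a + l)
    (hfix : ¬ ∃ x : ℝ, 1 ≤ x ∧ (((a : ℝ) * x + l) / b) ^ d = x)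
    (M : Matrix (Fin (a + b)) (Fin (a + b)) ℕ) (hM : IsMabl a b l M) :
    treeEntropy d M > Real.log b := by
  have hno := no_fp_lt hd (by omega) hsum hfix
  set P : ℕ → ℕ := pf d a b l with hP
  set Q : ℕ → ℕ := qf d b with hQ
  have hb1 : 1 ≤ b := by omega
  have hQ1 : ∀ n, 1 ≤ Q n := qf_pos d b hb1
  have hQP : ∀ n, Q n ≤ P n := qf_le_pf d a b l hsum
  have hP1 : ∀ n, 1 ≤ P n := fun n => le_trans (hQ1 n) (hQP n)
  have hA : (0:ℝ) < a := by exact_mod_cast ha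
  have hB : (0:ℝ) < b := by exact_mod_cast hb1
  have hQr : ∀ n, (0:ℝ) < (Q n : ℝ) := fun n => by exact_mod_cast hQ1 n
  have hPr : ∀ n, (0:ℝ) < (P n : ℝ) := fun n => by exact_mod_cast hP1 n
  set x : ℕ → ℝ := fun n => (P n : ℝ) / (Q n : ℝ) with hx
  have hx1 : ∀ n, 1 ≤ x n := fun n =>
    (one_le_div (hQr n)).2 (by exact_mod_cast hQP n)
  have hxrec : ∀ n, x (n + 1) = (((a:ℝ) * x n + l) / b) ^ d := by
    intro n
    have e1 : P (n + 1) = (a * P n + l * Q n) ^ d := rfl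
    have e2 : Q (n + 1) = (b * Q n) ^ d := rfl
    have hq0 : (Q n : ℝ) ≠ 0 := (hQr n).ne'
    have hb0 : (b : ℝ) ≠ 0 := hB.ne'
    show (P (n+1) : ℝ) / (Q (n+1) : ℝ) = (((a:ℝ) * ((P n : ℝ) / (Q n : ℝ)) + l) / b) ^ d
    rw [e1, e2]
    push_cast
    rw [← div_pow]
    congr 1
    rw [div_eq_div_iff (by positivity) hB.ne']
    field_simp
  have hmono : ∀ n, x n < x (n + 1) := fun n => by rw [hxrec n]; exact hno _ (hx1 n)
  have hMono : Monotone x := monotone_nat_of_le_succ fun n => (hmono n).le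
  have hfc : Continuous fun t : ℝ => (((a : ℝ) * t + l) / b) ^ d := by
    apply Continuous.pow
    exact ((continuous_const.mul continuous_id).add continuous_const).div_const _
  have htop : Tendsto x atTop atTop := by
    rcases tendsto_of_monotone hMono with h | ⟨c, hc⟩
    · exact h
    · exfalso
      have hc1 : (1:ℝ) ≤ c := le_trans (hx1 0) (hMono.ge_of_tendsto hc 0)
      have h2 : Tendsto (fun n => x (n + 1)) atTop (nhds c) :=
        hc.comp (tendsto_add_atTop_nat 1)
      have h3 : Tendsto (fun n => (((a:ℝ) * x n + l) / b) ^ d) atTop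
          (nhds ((((a:ℝ) * c + l) / b) ^ d)) := (hfc.tendsto c).comp hc
      have h4 : (((a:ℝ) * c + l) / b) ^ d = c := by
        apply tendsto_nhds_unique h3
        have : (fun n => (((a:ℝ) * x n + l) / b) ^ d) = fun n => x (n + 1) := by
          funext n; rw [hxrec n]
        rw [this]; exact h2
      exact absurd h4 (ne_of_gt (hno c hc1))
  obtain ⟨N, hN⟩ := (htop.eventually_gt_atTop (((b:ℝ) / a) ^ 2)).exists
  have hABpos : (0:ℝ) < (a:ℝ) / b := by positivity
  have hAB1 : (a:ℝ) / b ≤ 1 := by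
    rw [div_le_one hB]; exact_mod_cast hab.le
  set r : ℝ := x N * ((a:ℝ) / b) ^ 2 with hr
  have hr1 : 1 < r := by
    have hinv : ((b:ℝ) / a) ^ 2 * ((a:ℝ) / b) ^ 2 = 1 := by
      field_simp
    calc (1:ℝ) = ((b:ℝ) / a) ^ 2 * ((a:ℝ) / b) ^ 2 := hinv.symm
      _ < x N * ((a:ℝ) / b) ^ 2 := by
          apply mul_lt_mul_of_pos_right hN (by positivity)
  have hgrow : ∀ k, r ^ (d ^ k) ≤ x (N + k) * ((a:ℝ) / b) ^ 2 := by
    intro k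
    induction k with
    | zero => simp [hr]
    | succ k ih =>
        have hxk0 : (0:ℝ) ≤ x (N + k) := le_trans zero_le_one (hx1 _)
        have step1 : ((a:ℝ) * x (N + k) / b) ^ d ≤ x (N + k + 1) := by
          rw [hxrec]
          have hl0 : (0:ℝ) ≤ (l:ℝ) := by positivity
          have hnum : (a:ℝ) * x (N + k) / b ≤ ((a:ℝ) * x (N + k) + l) / b :=
            (div_le_div_iff_of_pos_right hB).2 (by linarith)
          exact pow_le_pow_left₀ (by positivity) hnum d
        have e1 : ((a:ℝ) * x (N + k) / b) ^ d * ((a:ℝ) / b) ^ 2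
            = ((a:ℝ) / b) ^ (d + 2) * x (N + k) ^ d := by
          have : (a:ℝ) * x (N + k) / b = ((a:ℝ) / b) * x (N + k) := by ring
          rw [this, mul_pow, pow_add]; ring
        have e2 : (x (N + k) * ((a:ℝ) / b) ^ 2) ^ d
            = ((a:ℝ) / b) ^ (2 * d) * x (N + k) ^ d := by
          rw [mul_pow, ← pow_mul]; ring
        have e3 : ((a:ℝ) / b) ^ (2 * d) ≤ ((a:ℝ) / b) ^ (d + 2) :=
          pow_le_pow_of_le_one hABpos.le hAB1 (by omega)
        calc r ^ d ^ (k + 1) = (r ^ d ^ k) ^ d := by rw [← pow_mul, pow_succ]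
          _ ≤ (x (N + k) * ((a:ℝ) / b) ^ 2) ^ d := by
              apply pow_le_pow_left₀ (by positivity) ih
          _ = ((a:ℝ) / b) ^ (2 * d) * x (N + k) ^ d := e2
          _ ≤ ((a:ℝ) / b) ^ (d + 2) * x (N + k) ^ d := by
              apply mul_le_mul_of_nonneg_right e3 (pow_nonneg hxk0 d)
          _ = ((a:ℝ) * x (N + k) / b) ^ d * ((a:ℝ) / b) ^ 2 := e1.symm
          _ ≤ x (N + k + 1) * ((a:ℝ) / b) ^ 2 := by
              apply mul_le_mul_of_nonneg_right step1 (by positivity)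
  have hlogx : ∀ k, (d ^ k : ℝ) * Real.log r ≤ Real.log (x (N + k)) := by
    intro k
    have h1 : r ^ (d ^ k) ≤ x (N + k) := by
      calc r ^ (d ^ k) ≤ x (N + k) * ((a:ℝ) / b) ^ 2 := hgrow k
        _ ≤ x (N + k) * 1 := by
            apply mul_le_mul_of_nonneg_left ?_ (le_trans zero_le_one (hx1 _))
            calc ((a:ℝ)/b) ^ 2 ≤ 1 ^ 2 := pow_le_pow_left₀ hABpos.le hAB1 2
              _ = 1 := one_pow 2
        _ = x (N + k) := mul_one _
    have h2 := Real.log_le_log (by positivity) h1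
    rw [Real.log_pow] at h2
    exact_mod_cast h2
  -- logs of Q and P
  have hQlog : ∀ n, Real.log (Q n) = (deltaCard d n : ℝ) * Real.log b - Real.log b := by
    intro n
    have h : ((b : ℝ)) * (Q n : ℝ) = (b:ℝ) ^ deltaCard d n := by
      exact_mod_cast congrArg (Nat.cast : ℕ → ℝ) (mul_qf d b n)
    have hq : (Q n : ℝ) = (b:ℝ) ^ deltaCard d n / b := by
      field_simp
      linarith [h]
    rw [hq, Real.log_div (by positivity) hB.ne', Real.log_pow]
  have hPlog : ∀ n, Real.log (P n) = Real.log (Q n) + Real.log (x n) := by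
    intro n
    rw [hx]
    rw [Real.log_div (hPr n).ne' (hQr n).ne']
    ring
  set S : ℕ → ℕ := fun n => ∑ i, treeP d M n i with hS
  have hSeq : ∀ n, S n = a * P n + b * Q n := fun n => sum_treeP M hM n
  have hSP : ∀ n, (P n : ℝ) ≤ (S n : ℝ) := by
    intro n
    have : P n ≤ a * P n + b * Q n := by
      have := Nat.le_mul_of_pos_left (P n) (show 0 < a by omega)
      omega
    rw [hSeq n]; exact_mod_cast this
  set u : ℕ → ℝ := fun n => Real.log (S n) / (deltaCard d n : ℝ) with hu
  have hΔpos : ∀ n, (0:ℝ) < (deltaCard d n : ℝ) := fun n => by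
    exact_mod_cast one_le_deltaCard d n
  have hub : ∀ n, u n ≤ Real.log (a + b) := by
    intro n
    rw [hu]
    rw [div_le_iff₀ (hΔpos n)]
    have h1 : S n ≤ (a + b) ^ deltaCard d n := by
      have h2 : (a + b) * P n ≤ (a + b) ^ deltaCard d n := mul_pf_le d a b l hlb hsum n
      have h3 : b * Q n ≤ b * P n := Nat.mul_le_mul_left b (hQP n)
      have h4 : a * P n + b * P n = (a + b) * P n := by ring
      have h5 := hSeq n
      omega
    have h6 : Real.log (S n) ≤ Real.log (((a + b : ℕ) : ℝ) ^ deltaCard d n) := by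
      apply Real.log_le_log (lt_of_lt_of_le (hPr n) (hSP n))
      exact_mod_cast h1
    rw [Real.log_pow] at h6
    calc Real.log (S n) ≤ (deltaCard d n : ℝ) * Real.log ((a + b : ℕ) : ℝ) := h6
      _ = Real.log (a + b) * (deltaCard d n : ℝ) := by push_cast; ring
  have hbdd : IsBoundedUnder (· ≤ ·) atTop u := isBoundedUnder_of ⟨Real.log (a + b), hub⟩
  have hrlog : 0 < Real.log r := Real.log_pos hr1
  have hdN : (0:ℝ) < (d:ℝ) ^ (N + 1) := by positivity
  set ε : ℝ := Real.log r / (2 * (d:ℝ) ^ (N + 1)) with hε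
  have hεpos : 0 < ε := by positivity
  have hfreq : ∃ᶠ n in atTop, Real.log b + ε ≤ u n := by
    rw [Filter.frequently_atTop]
    intro m
    set K := max m (Nat.ceil (2 * Real.log b / Real.log r)) with hK
    refine ⟨N + K, by omega, ?_⟩
    set n := N + K with hn
    have hΔ := hΔpos n
    -- log S n ≥ Δ log b - log b + d^K log r
    have hlogS : (deltaCard d n : ℝ) * Real.log b - Real.log b + (d ^ K : ℝ) * Real.log r
        ≤ Real.log (S n) := by
      have h1 := hlogx K
      have h2 : Real.log (P n) ≤ Real.log (S n) :=
        Real.log_le_log (hPr n) (hSP n)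
      rw [hPlog n, hQlog n] at *
      linarith [h1, h2]
    rw [hu]
    rw [le_div_iff₀ (hΔpos n)]
    -- key : (log b + ε) * Δ ≤ Δ log b - log b + d^K log r
    have hΔle : (deltaCard d n : ℝ) ≤ (d:ℝ) ^ (n + 1) := by
      exact_mod_cast (deltaCard_lt d n hd).le
    have hpow : (d:ℝ) ^ (n + 1) = (d:ℝ) ^ (N + 1) * (d:ℝ) ^ K := by
      rw [← pow_add]; congr 1; omega
    have hεΔ : ε * (deltaCard d n : ℝ) ≤ (d ^ K : ℝ) * Real.log r / 2 := by
      calc ε * (deltaCard d n : ℝ) ≤ ε * ((d:ℝ) ^ (N + 1) * (d:ℝ) ^ K) := by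
            rw [← hpow]
            exact mul_le_mul_of_nonneg_left hΔle hεpos.le
        _ = (d ^ K : ℝ) * Real.log r / 2 := by
            rw [hε]; push_cast; field_simp
    have hlb2 : Real.log b ≤ (d ^ K : ℝ) * Real.log r / 2 := by
      have hKc : (2 * Real.log b / Real.log r) ≤ (K : ℝ) :=
        le_trans (Nat.le_ceil _) (by exact_mod_cast le_max_right m _)
      have hKd : (K : ℝ) ≤ (d:ℝ) ^ K := by
        calc (K : ℝ) ≤ (2:ℝ) ^ K := by exact_mod_cast (Nat.lt_two_pow_self (n := K)).le
          _ ≤ (d:ℝ) ^ K := by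
              apply pow_le_pow_left₀ (by norm_num)
              exact_mod_cast hd
      have h7 : 2 * Real.log b / Real.log r ≤ (d:ℝ) ^ K := le_trans hKc hKd
      rw [div_le_iff₀ hrlog] at h7
      push_cast
      linarith
    push_cast at hεΔ hlb2 hlogS ⊢
    nlinarith [hlogS, hεΔ, hlb2, hΔ]
  have hlim := le_limsup_of_frequently_le hfreq hbdd
  have heq : treeEntropy d M = limsup u atTop := by
    simp only [treeEntropy, hu, hS, Nat.cast_sum]
  rw [heq]
  calc Real.log b < Real.log b + ε := by linarith
    _ ≤ limsup u atTop := hlim
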